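/- arXiv:1201.6089 — 3 statements merged into one kernel-verified Lean document; each statement's English description precedes it below -/
import Mathlib

section
/- Let (X_n) be a uniformly elliptic process in ℝ^2 with constants r, h and jumps bounded by K ≥ 1, with drift D_n = E[X_{n+1}-X_n | F_n], and let Y_n = X_n − Σ_{k<n} D_k be the associated martingale. Then Y is uniformly elliptic with constants r' = rh/(2√2) and h' = rh/(4K); that is, for every unit vector ℓ, P[(Y_{n+1}-Y_n)·ℓ > r' | F_n] > h' a.s. -/
open MeasureTheory RealInnerProductSpace

private lemma condexp_const_inner_aux {Ω E : Type*} [NormedAddCommGroup E]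
    [InnerProductSpace ℝ E] [CompleteSpace E] {m m0 : MeasurableSpace Ω} (hm : m ≤ m0)
    {μ : Measure Ω} [IsFiniteMeasure μ] {f : Ω → E} (hf : Integrable f μ) (c : E) :
    (fun ω => ⟪c, (μ[f|m]) ω⟫) =ᵐ[μ] μ[fun ω => ⟪c, f ω⟫|m] := by
  haveI : SigmaFinite (μ.trim hm) := by infer_instance
  refine ae_eq_condExp_of_forall_setIntegral_eq hm (hf.const_inner c)
    (fun s _ _ => (integrable_condExp.const_inner c).integrableOn)
    (fun s hs hμs => ?_)
    (StronglyMeasurable.aestronglyMeasurable (stronglyMeasurable_const.inner stronglyMeasurable_condExp))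
  rw [integral_inner integrable_condExp.integrableOn c,
    integral_inner hf.integrableOn c, setIntegral_condExp hm hf hs]

private lemma key_lemma {Ω : Type*} {m m0 : MeasurableSpace Ω} (hm : m ≤ m0)
    (μ : Measure Ω) [IsProbabilityMeasure μ]
    (F G : Ω → ℝ) (K r h : ℝ) (hK : 1 ≤ K) (hr : 0 < r) (hh : 0 < h)
    (hF_int : Integrable F μ) (hF_sm : StronglyMeasurable F)
    (hG_m : StronglyMeasurable[m] G) (hG_int : Integrable G μ)
    (hGF : G =ᵐ[μ] μ[F|m])
    (hFK : ∀ᵐ ω ∂μ, |F ω| ≤ K)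
    (hU1 : ∀ᵐ ω ∂μ, h < (μ[Set.indicator {ω' | r < F ω'} (fun _ => (1 : ℝ))|m]) ω)
    (hU2 : ∀ᵐ ω ∂μ, h < (μ[Set.indicator {ω' | r < -(F ω')} (fun _ => (1 : ℝ))|m]) ω) :
    ∀ᵐ ω ∂μ, r * h / (4 * K) <
      (μ[Set.indicator {ω' | r * h / (2 * Real.sqrt 2) < F ω' - G ω'}
        (fun _ => (1 : ℝ))|m]) ω := by
  haveI : SigmaFinite (μ.trim hm) := by infer_instance
  have hK0 : (0:ℝ) < K := lt_of_lt_of_le one_pos hK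
  have hG_sm : StronglyMeasurable G := hG_m.mono hm
  -- bound on G
  have hGK : ∀ᵐ ω ∂μ, |G ω| ≤ K := by
    have hb : ∀ᵐ ω ∂μ, |F ω| ≤ ((⟨K, hK0.le⟩ : NNReal) : ℝ) := hFK
    filter_upwards [hGF, ae_bdd_condExp_of_ae_bdd (m := m) hb] with ω h1 h2
    rw [h1]; exact h2
  set W : Ω → ℝ := fun ω => F ω - G ω with hW_def
  have hW_int : Integrable W μ := hF_int.sub hG_int
  have hW_sm : StronglyMeasurable W := hF_sm.sub hG_sm
  have hWK : ∀ᵐ ω ∂μ, |W ω| ≤ 2 * K := by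
    filter_upwards [hFK, hGK] with ω h1 h2
    simp only [hW_def]
    calc |F ω - G ω| ≤ |F ω| + |G ω| := abs_sub _ _
      _ ≤ 2 * K := by linarith
  -- conditional expectation of W is 0
  have hW0 : μ[W|m] =ᵐ[μ] 0 := by
    have h1 : μ[W|m] =ᵐ[μ] μ[F|m] - μ[G|m] := condExp_sub hF_int hG_int _
    have h2 : μ[G|m] = G := condExp_of_stronglyMeasurable hm hG_m hG_int
    filter_upwards [h1, hGF] with ω hω1 hω2
    simp only [Pi.sub_apply, Pi.zero_apply] at *
    rw [hω1, h2, hω2, sub_self]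
  -- positive and negative parts
  set P : Ω → ℝ := fun ω => max (W ω) 0 with hP_def
  set N : Ω → ℝ := fun ω => max (-W ω) 0 with hN_def
  have hP_int : Integrable P μ := hW_int.pos_part
  have hN_int : Integrable N μ := hW_int.neg.pos_part
  have hPN : μ[P|m] =ᵐ[μ] μ[N|m] := by
    have h1 : μ[P - N|m] =ᵐ[μ] μ[P|m] - μ[N|m] := condExp_sub hP_int hN_int _
    have h2 : P - N = W := by
      funext ω
      simp only [Pi.sub_apply, hP_def, hN_def, hW_def]
      exact max_zero_sub_max_neg_zero_eq_self _
    rw [h2] at h1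
    filter_upwards [h1, hW0] with ω hω1 hω2
    simp only [Pi.sub_apply, Pi.zero_apply] at *
    linarith [hω1.symm.trans hω2]
  have hPbig : ∀ᵐ ω ∂μ, r * h < (μ[P|m]) ω := by
    -- the m-measurable set where G ≤ 0
    set S : Set Ω := {ω | G ω ≤ 0} with hS_def
    have hS : MeasurableSet[m] S := measurableSet_le hG_m.measurable measurable_const
    set χ : Ω → ℝ := S.indicator (fun _ => r) with hχ_def
    have hχ_m : StronglyMeasurable[m] χ := stronglyMeasurable_const.indicator hS
    have hχ_bdd : ∀ x, ‖χ x‖ ≤ r := by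
      intro x
      by_cases hx : x ∈ S <;>
        simp [hχ_def, Set.indicator_of_mem, Set.indicator_of_notMem, hx, abs_of_nonneg hr.le, hr.le]
    set χ' : Ω → ℝ := Sᶜ.indicator (fun _ => r) with hχ'_def
    have hχ'_m : StronglyMeasurable[m] χ' := stronglyMeasurable_const.indicator hS.compl
    have hχ'_bdd : ∀ x, ‖χ' x‖ ≤ r := by
      intro x
      by_cases hx : x ∈ Sᶜ <;>
        simp [hχ'_def, Set.indicator_of_mem, Set.indicator_of_notMem, hx, abs_of_nonneg hr.le, hr.le]
    -- the indicator functions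
    set I₁ : Ω → ℝ := Set.indicator {ω' | r < F ω'} (fun _ => (1 : ℝ)) with hI₁_def
    set I₂ : Ω → ℝ := Set.indicator {ω' | r < -(F ω')} (fun _ => (1 : ℝ)) with hI₂_def
    have hs₁ : MeasurableSet {ω' | r < F ω'} := measurableSet_lt measurable_const hF_sm.measurable
    have hs₂ : MeasurableSet {ω' | r < -(F ω')} :=
      measurableSet_lt measurable_const hF_sm.measurable.neg
    have hI₁_int : Integrable I₁ μ := (integrable_const (1 : ℝ)).indicator hs₁
    have hI₂_int : Integrable I₂ μ := (integrable_const (1 : ℝ)).indicator hs₂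
    have hc₁_int : Integrable (χ * I₁) μ :=
      hI₁_int.bdd_mul ((hχ_m.mono hm).aestronglyMeasurable) (Filter.Eventually.of_forall hχ_bdd)
    have hc₂_int : Integrable (χ' * I₂) μ :=
      hI₂_int.bdd_mul ((hχ'_m.mono hm).aestronglyMeasurable) (Filter.Eventually.of_forall hχ'_bdd)
    have hmul1 : μ[χ * I₁|m] =ᵐ[μ] χ * μ[I₁|m] :=
      condExp_mul_of_stronglyMeasurable_left hχ_m hc₁_int hI₁_int
    have hmul2 : μ[χ' * I₂|m] =ᵐ[μ] χ' * μ[I₂|m] :=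
      condExp_mul_of_stronglyMeasurable_left hχ'_m hc₂_int hI₂_int
    have hpt1 : ∀ ω, (χ * I₁) ω ≤ P ω := by
      intro ω
      have hP0 : 0 ≤ P ω := by simp [hP_def, le_max_right]
      by_cases hωS : ω ∈ S
      · by_cases hωr : r < F ω
        · have hmem : ω ∈ {ω' | r < F ω'} := hωr
          have : (χ * I₁) ω = r := by
            simp [hχ_def, hI₁_def, Pi.mul_apply, Set.indicator_of_mem hωS,
              Set.indicator_of_mem hmem]
          rw [this, hP_def]
          have hG0 : G ω ≤ 0 := hωS
          have : r ≤ W ω := by rw [hW_def]; simp only; linarith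
          exact le_trans this (le_max_left _ _)
        · have : (χ * I₁) ω = 0 := by
            simp [hI₁_def, Pi.mul_apply, Set.indicator_of_notMem, hωr]
          rw [this]; exact hP0
      · have : (χ * I₁) ω = 0 := by
          simp [hχ_def, Pi.mul_apply, Set.indicator_of_notMem, hωS]
        rw [this]; exact hP0
    have hpt2 : ∀ ω, (χ' * I₂) ω ≤ N ω := by
      intro ω
      have hN0 : 0 ≤ N ω := by simp [hN_def, le_max_right]
      by_cases hωS : ω ∈ Sᶜ
      · by_cases hωr : r < -(F ω)
        · have hmem : ω ∈ {ω' | r < -(F ω')} := hωr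
          have : (χ' * I₂) ω = r := by
            simp [hχ'_def, hI₂_def, Pi.mul_apply, Set.indicator_of_mem hωS,
              Set.indicator_of_mem hmem]
          rw [this, hN_def]
          have hG0 : 0 < G ω := by
            simp only [hS_def, Set.mem_compl_iff, Set.mem_setOf_eq, not_le] at hωS
            exact hωS
          have : r ≤ -W ω := by rw [hW_def]; simp only; linarith
          exact le_trans this (le_max_left _ _)
        · have : (χ' * I₂) ω = 0 := by
            simp [hI₂_def, Pi.mul_apply, Set.indicator_of_notMem, hωr]
          rw [this]; exact hN0
      · have : (χ' * I₂) ω = 0 := by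
          simp [hχ'_def, Pi.mul_apply, Set.indicator_of_notMem, hωS]
        rw [this]; exact hN0
    have hle1 : μ[χ * I₁|m] ≤ᵐ[μ] μ[P|m] :=
      condExp_mono hc₁_int hP_int (Filter.Eventually.of_forall hpt1)
    have hle2 : μ[χ' * I₂|m] ≤ᵐ[μ] μ[N|m] :=
      condExp_mono hc₂_int hN_int (Filter.Eventually.of_forall hpt2)
    filter_upwards [hU1, hU2, hmul1, hmul2, hle1, hle2, hPN] with ω hu1 hu2 hm1 hm2 hl1 hl2 hpn
    by_cases hωS : ω ∈ S
    · have : r * (μ[I₁|m]) ω ≤ (μ[P|m]) ω := by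
        have := le_trans (le_of_eq hm1.symm) hl1
        calc r * (μ[I₁|m]) ω = (χ * μ[I₁|m]) ω := by
              simp [hχ_def, Pi.mul_apply, Set.indicator_of_mem hωS]
          _ ≤ (μ[P|m]) ω := this
      calc r * h < r * (μ[I₁|m]) ω := by exact (mul_lt_mul_iff_right₀ hr).2 hu1
        _ ≤ (μ[P|m]) ω := this
    · have : r * (μ[I₂|m]) ω ≤ (μ[N|m]) ω := by
        have := le_trans (le_of_eq hm2.symm) hl2
        calc r * (μ[I₂|m]) ω = (χ' * μ[I₂|m]) ω := by
              simp [hχ'_def, Pi.mul_apply, Set.indicator_of_mem, hωS]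
          _ ≤ (μ[N|m]) ω := this
      calc r * h < r * (μ[I₂|m]) ω := (mul_lt_mul_iff_right₀ hr).2 hu2
        _ ≤ (μ[N|m]) ω := this
        _ = (μ[P|m]) ω := hpn.symm
  rw [show {ω' | r * h / (2 * Real.sqrt 2) < F ω' - G ω'}
      = {ω' | r * h / (2 * Real.sqrt 2) < W ω'} from rfl]
  have hs2 : (1:ℝ) ≤ Real.sqrt 2 := by
    rw [show (1:ℝ) = Real.sqrt 1 by simp]
    exact Real.sqrt_le_sqrt (by norm_num)
  set c : ℝ := r * h / (2 * Real.sqrt 2) with hc_def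
  have hc_pos : 0 < c := by
    apply div_pos (by positivity)
    positivity
  have hc_le : c ≤ r * h / 2 := by
    rw [hc_def, div_le_div_iff₀ (by positivity) (by norm_num : (0:ℝ) < 2)]
    nlinarith [mul_le_mul_of_nonneg_left hs2 (show (0:ℝ) ≤ r * h * 2 by positivity)]
  set I : Ω → ℝ := Set.indicator {ω' | c < W ω'} (fun _ => (1 : ℝ)) with hI_def
  have hT : MeasurableSet {ω' | c < W ω'} := measurableSet_lt measurable_const hW_sm.measurable
  have hI_int : Integrable I μ := (integrable_const (1 : ℝ)).indicator hT
  have hpoint : ∀ᵐ ω ∂μ, P ω ≤ (fun ω => c + (2 * K) * I ω) ω := by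
    filter_upwards [hWK] with ω hb
    simp only [hP_def]
    by_cases hωT : ω ∈ {ω' | c < W ω'}
    · have hI1 : I ω = 1 := by simp [hI_def, Set.indicator_of_mem hωT]
      rw [hI1]
      have h1 : W ω ≤ 2 * K := le_trans (le_abs_self _) hb
      have h2 : (0:ℝ) ≤ 2 * K := by linarith
      simp only [max_le_iff]
      constructor <;> nlinarith
    · have hI0 : I ω = 0 := by simp [hI_def, Set.indicator_of_notMem hωT]
      have hWc : W ω ≤ c := le_of_not_gt hωT
      rw [hI0]
      simp only [max_le_iff]
      constructor <;> nlinarith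
  have hRHS_int : Integrable (fun ω => c + (2 * K) * I ω) μ := by
    exact (integrable_const c).add (hI_int.const_mul (2 * K))
  have hcond : μ[fun ω => c + (2 * K) * I ω|m] =ᵐ[μ] fun ω => c + (2 * K) * (μ[I|m]) ω := by
    have heq : (fun ω => c + (2 * K) * I ω) = (fun _ => c) + (2 * K) • I := by
      funext ω; simp [Pi.add_apply, Pi.smul_apply, smul_eq_mul]
    rw [heq]
    have h1 : μ[(fun _ => c) + (2 * K) • I|m] =ᵐ[μ] μ[fun _ => c|m] + μ[(2 * K) • I|m] :=
      condExp_add (integrable_const c) (hI_int.smul (2 * K)) _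
    have h2 : μ[(2 * K) • I|m] =ᵐ[μ] (2 * K) • μ[I|m] := condExp_smul (2 * K) I _
    have h3 : μ[fun _ : Ω => c|m] = fun _ => c := condExp_const hm c
    filter_upwards [h1, h2] with ω hω1 hω2
    simp only [Pi.add_apply, Pi.smul_apply, smul_eq_mul] at *
    rw [hω1, hω2, h3]
  have hmono : μ[P|m] ≤ᵐ[μ] μ[fun ω => c + (2 * K) * I ω|m] :=
    condExp_mono hP_int hRHS_int hpoint
  filter_upwards [hPbig, hmono, hcond] with ω h1 h2 h3
  rw [h3] at h2
  have h4 : r * h < c + (2 * K) * (μ[I|m]) ω := lt_of_lt_of_le h1 h2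
  rw [div_lt_iff₀ (by positivity : (0:ℝ) < 4 * K)]
  have h5 : r * h / 2 < (2 * K) * (μ[I|m]) ω := by
    have := lt_of_lt_of_le (by linarith : r * h - c < (2*K) * (μ[I|m]) ω) (le_refl _)
    linarith [hc_le]
  nlinarith


/-- If `X` is uniformly elliptic in `ℝ²` with constants `r, h` and jumps bounded by `K ≥ 1`,
then the associated martingale `Y_n = X_n − Σ_{k<n} D_k` is uniformly elliptic with constants
`r' = rh/(2√2)` and `h' = rh/(4K)`. -/
theorem stmt_8 {Ω : Type*} [MeasurableSpace Ω] (μ : Measure Ω) [IsProbabilityMeasure μ]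
    (ℱ : Filtration ℕ (inferInstance : MeasurableSpace Ω))
    (X : ℕ → Ω → EuclideanSpace ℝ (Fin 2)) (K r h : ℝ)
    (hK : 1 ≤ K) (hr : 0 < r) (hr1 : r ≤ 1) (hh : 0 < h)
    (hadapted : Adapted ℱ X) (hint : ∀ n, Integrable (X n) μ)
    (hjumps : ∀ n, ∀ᵐ ω ∂μ, ‖X (n + 1) ω - X n ω‖ ≤ K)
    (hUE : ∀ (n : ℕ) (ℓ : EuclideanSpace ℝ (Fin 2)), ‖ℓ‖ = 1 →
      ∀ᵐ ω ∂μ, h < (μ[Set.indicator {ω' | r < ⟪ℓ, X (n + 1) ω' - X n ω'⟫} (fun _ => (1 : ℝ)) | ℱ n]) ω)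
    (D : ℕ → Ω → EuclideanSpace ℝ (Fin 2))
    (hD : ∀ k, D k = μ[fun ω => X (k + 1) ω - X k ω | ℱ k])
    (Y : ℕ → Ω → EuclideanSpace ℝ (Fin 2))
    (hY : ∀ n ω, Y n ω = X n ω - ∑ k ∈ Finset.range n, D k ω) :
    ∀ (n : ℕ) (ℓ : EuclideanSpace ℝ (Fin 2)), ‖ℓ‖ = 1 →
      ∀ᵐ ω ∂μ, r * h / (4 * K) <
        (μ[Set.indicator {ω' | r * h / (2 * Real.sqrt 2) < ⟪ℓ, Y (n + 1) ω' - Y n ω'⟫}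
          (fun _ => (1 : ℝ)) | ℱ n]) ω := by
  intro n ℓ hℓ
  have hm : ℱ n ≤ (inferInstance : MeasurableSpace Ω) := ℱ.le n
  have hℓ' : ‖-ℓ‖ = 1 := by rw [norm_neg]; exact hℓ
  have hA_int : Integrable (fun ω => X (n + 1) ω - X n ω) μ := (hint (n + 1)).sub (hint n)
  have hA_sm : StronglyMeasurable (fun ω => X (n + 1) ω - X n ω) :=
    ((hadapted (n + 1)).mono (ℱ.le (n + 1)) le_rfl).stronglyMeasurable.sub ((hadapted n).mono (ℱ.le n) le_rfl).stronglyMeasurable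
  have hD_int : Integrable (D n) μ := by rw [hD n]; exact integrable_condExp
  have hD_m : StronglyMeasurable[ℱ n] (D n) := by rw [hD n]; exact stronglyMeasurable_condExp
  have hGF : (fun ω => ⟪ℓ, D n ω⟫) =ᵐ[μ] μ[fun ω => ⟪ℓ, X (n + 1) ω - X n ω⟫|ℱ n] := by
    rw [hD n]
    exact condexp_const_inner_aux hm hA_int ℓ
  have hFK : ∀ᵐ ω ∂μ, |⟪ℓ, X (n + 1) ω - X n ω⟫| ≤ K := by
    filter_upwards [hjumps n] with ω hω
    calc |⟪ℓ, X (n + 1) ω - X n ω⟫| ≤ ‖ℓ‖ * ‖X (n + 1) ω - X n ω‖ := abs_real_inner_le_norm _ _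
      _ = ‖X (n + 1) ω - X n ω‖ := by rw [hℓ, one_mul]
      _ ≤ K := hω
  have hU2 : ∀ᵐ ω ∂μ, h < (μ[Set.indicator
      {ω' | r < -(⟪ℓ, X (n + 1) ω' - X n ω'⟫)} (fun _ => (1 : ℝ))|ℱ n]) ω := by
    have := hUE n (-ℓ) hℓ'
    simpa only [inner_neg_left] using this
  have hset : {ω' | r * h / (2 * Real.sqrt 2) < ⟪ℓ, Y (n + 1) ω' - Y n ω'⟫}
      = {ω' | r * h / (2 * Real.sqrt 2) <
          (fun ω => ⟪ℓ, X (n + 1) ω - X n ω⟫) ω' - (fun ω => ⟪ℓ, D n ω⟫) ω'} := by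
    ext ω'
    simp only [Set.mem_setOf_eq]
    have hYd : Y (n + 1) ω' - Y n ω' = (X (n + 1) ω' - X n ω') - D n ω' := by
      rw [hY, hY, Finset.sum_range_succ]; abel
    rw [hYd, inner_sub_right]
  rw [hset]
  exact key_lemma hm μ (fun ω => ⟪ℓ, X (n + 1) ω - X n ω⟫) (fun ω => ⟪ℓ, D n ω⟫) K r h hK hr hh
    (hA_int.const_inner ℓ) (stronglyMeasurable_const.inner hA_sm)
    (stronglyMeasurable_const.inner hD_m) (hD_int.const_inner ℓ) hGF hFK (hUE n ℓ hℓ) hU2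
end

section
/- Let (ξ, η) be a pair of conditionally defined random variables such that ξ = (Y_{n+1}-Y_n)·D̃_n for a martingale Y with jumps bounded by 2K, where D̃_n is F_n-measurable of unit norm, and assume P[ξ ≤ −r | F_n] ≥ h. Then E[ξ^+ | F_n] = E[ξ^- | F_n] ≥ rh and consequently P[ξ ≥ rh/2 | F_n] ≥ rh/(4K). -/
open MeasureTheory RealInnerProductSpace Filter

private lemma stmt_9_aux {Ω : Type*} [MeasurableSpace Ω] (μ : Measure Ω) [IsProbabilityMeasure μ]
    (ℱ : Filtration ℕ (inferInstance : MeasurableSpace Ω))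
    (Y : ℕ → Ω → EuclideanSpace ℝ (Fin 2))
    (hmart : Martingale Y ℱ μ) (n : ℕ) (i : Fin 2) :
    μ[fun ω => (Y (n+1) ω - Y n ω) i | ℱ n] =ᵐ[μ] 0 := by
  have hZint : Integrable (fun ω => Y (n+1) ω - Y n ω) μ :=
    (hmart.integrable (n+1)).sub (hmart.integrable n)
  have hZi_int : Integrable (fun ω => (Y (n+1) ω - Y n ω) i) μ := by
    have := (EuclideanSpace.proj (𝕜 := ℝ) i).integrable_comp hZint
    simpa using this
  refine (ae_eq_condExp_of_forall_setIntegral_eq (ℱ.le n) hZi_int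
    (g := (0 : Ω → ℝ)) (fun s _ _ => integrableOn_zero) (fun s hs hμs => ?_)
    (stronglyMeasurable_const.aestronglyMeasurable)).symm
  simp only [Pi.zero_apply, integral_zero]
  have h1 : ∫ ω in s, (EuclideanSpace.proj (𝕜 := ℝ) i) (Y (n+1) ω - Y n ω) ∂μ
      = (EuclideanSpace.proj (𝕜 := ℝ) i) (∫ ω in s, (Y (n+1) ω - Y n ω) ∂μ) :=
    ContinuousLinearMap.integral_comp_comm _ hZint.integrableOn
  simp only [EuclideanSpace.proj, PiLp.proj_apply] at h1
  rw [eq_comm, h1, integral_sub (hmart.integrable (n+1)).integrableOn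
    (hmart.integrable n).integrableOn, ← hmart.setIntegral_eq (Nat.le_succ n) hs, sub_self]
  rfl

/-- Let `Y` be a martingale with jumps bounded by `2K` and `D̃` an `F_n`-measurable unit
vector, and set `ξ = (Y_{n+1}-Y_n)·D̃_n`. If `P[ξ ≤ −r | F_n] ≥ h` a.s., then
`E[ξ⁺ | F_n] = E[ξ⁻ | F_n] ≥ rh` and `P[ξ ≥ rh/2 | F_n] ≥ rh/(4K)` a.s. -/
theorem stmt_9 {Ω : Type*} [MeasurableSpace Ω] (μ : Measure Ω) [IsProbabilityMeasure μ]
    (ℱ : Filtration ℕ (inferInstance : MeasurableSpace Ω))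
    (Y : ℕ → Ω → EuclideanSpace ℝ (Fin 2)) (K r h : ℝ)
    (hK : 1 ≤ K) (hr : 0 < r) (hh : 0 < h)
    (hmart : Martingale Y ℱ μ)
    (hjumps : ∀ m, ∀ᵐ ω ∂μ, ‖Y (m + 1) ω - Y m ω‖ ≤ 2 * K)
    (n : ℕ) (Dt : Ω → EuclideanSpace ℝ (Fin 2))
    (hDtmeas : StronglyMeasurable[ℱ n] Dt) (hDtnorm : ∀ ω, ‖Dt ω‖ = 1)
    (ξ : Ω → ℝ) (hξ : ∀ ω, ξ ω = ⟪Dt ω, Y (n + 1) ω - Y n ω⟫)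
    (hneg : ∀ᵐ ω ∂μ, h ≤ (μ[Set.indicator {ω' | ξ ω' ≤ -r} (fun _ => (1 : ℝ)) | ℱ n]) ω) :
    (∀ᵐ ω ∂μ, (μ[fun ω' => max (ξ ω') 0 | ℱ n]) ω = (μ[fun ω' => max (-ξ ω') 0 | ℱ n]) ω ∧
      r * h ≤ (μ[fun ω' => max (ξ ω') 0 | ℱ n]) ω) ∧
    (∀ᵐ ω ∂μ, r * h / (4 * K) ≤
      (μ[Set.indicator {ω' | r * h / 2 ≤ ξ ω'} (fun _ => (1 : ℝ)) | ℱ n]) ω) := by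
  have hK0 : (0 : ℝ) < K := lt_of_lt_of_le one_pos hK
  -- basic measurability / integrability facts
  have hZsm : StronglyMeasurable (fun ω => Y (n+1) ω - Y n ω) :=
    ((hmart.stronglyAdapted (n+1)).mono (ℱ.le (n+1))).sub ((hmart.stronglyAdapted n).mono (ℱ.le n))
  have hZint : Integrable (fun ω => Y (n+1) ω - Y n ω) μ :=
    (hmart.integrable (n+1)).sub (hmart.integrable n)
  have hDtsm : StronglyMeasurable Dt := hDtmeas.mono (ℱ.le n)
  have hξsm : StronglyMeasurable ξ := by
    have : ξ = fun ω => ⟪Dt ω, Y (n+1) ω - Y n ω⟫ := funext hξ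
    rw [this]; exact hDtsm.inner hZsm
  have hξbdd : ∀ᵐ ω ∂μ, |ξ ω| ≤ 2 * K := by
    filter_upwards [hjumps n] with ω hω
    rw [hξ ω]
    calc |⟪Dt ω, Y (n+1) ω - Y n ω⟫| ≤ ‖Dt ω‖ * ‖Y (n+1) ω - Y n ω‖ :=
          abs_real_inner_le_norm _ _
      _ = ‖Y (n+1) ω - Y n ω‖ := by rw [hDtnorm ω, one_mul]
      _ ≤ 2 * K := hω
  have hξint : Integrable ξ μ :=
    ⟨hξsm.aestronglyMeasurable, HasFiniteIntegral.of_bounded (C := 2 * K) (by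
      simpa [Real.norm_eq_abs] using hξbdd)⟩
  -- conditional expectation of ξ is zero
  have hzero : μ[ξ | ℱ n] =ᵐ[μ] 0 := by
    have hrw : ξ = ∑ i : Fin 2, (fun ω => Dt ω i * (Y (n+1) ω - Y n ω) i) := by
      funext ω
      rw [hξ ω]
      simp [PiLp.inner_apply, RCLike.inner_apply, conj_trivial, Finset.sum_apply]
      ring
    have hDti : ∀ i : Fin 2, StronglyMeasurable[ℱ n] (fun ω => Dt ω i) := by
      intro i
      exact ((EuclideanSpace.proj (𝕜 := ℝ) i).continuous.comp_stronglyMeasurable hDtmeas)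
    have hDti_bdd : ∀ (i : Fin 2) ω, ‖Dt ω i‖ ≤ 1 := by
      intro i ω
      calc ‖Dt ω i‖ ≤ ‖Dt ω‖ := by
            rw [EuclideanSpace.norm_eq, Real.norm_eq_abs, ← Real.sqrt_sq_eq_abs]
            apply Real.sqrt_le_sqrt
            have := Finset.single_le_sum (f := fun j => ‖Dt ω j‖ ^ 2)
              (fun j _ => sq_nonneg _) (Finset.mem_univ i)
            simpa [Real.norm_eq_abs, sq_abs] using this
        _ = 1 := hDtnorm ω
    have hZi_int : ∀ i : Fin 2, Integrable (fun ω => (Y (n+1) ω - Y n ω) i) μ := by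
      intro i
      have := (EuclideanSpace.proj (𝕜 := ℝ) i).integrable_comp hZint
      simpa using this
    calc μ[ξ | ℱ n]
        = μ[∑ i : Fin 2, (fun ω => Dt ω i * (Y (n+1) ω - Y n ω) i) | ℱ n] := by rw [hrw]
      _ =ᵐ[μ] ∑ i : Fin 2, μ[(fun ω => Dt ω i * (Y (n+1) ω - Y n ω) i) | ℱ n] := by
          refine condExp_finset_sum (fun i _ => ?_) _
          exact (hZi_int i).bdd_mul ((hDti i).mono (ℱ.le n)).aestronglyMeasurable
            (Eventually.of_forall (hDti_bdd i))
      _ =ᵐ[μ] 0 := by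
          have hterm : ∀ i : Fin 2,
              μ[(fun ω => Dt ω i * (Y (n+1) ω - Y n ω) i) | ℱ n] =ᵐ[μ] 0 := by
            intro i
            have h1 := condExp_stronglyMeasurable_mul_of_bound (ℱ.le n) (hDti i)
              (hZi_int i) 1 (Eventually.of_forall (hDti_bdd i))
            have h2 := stmt_9_aux μ ℱ Y hmart n i
            refine (EventuallyEq.trans (by exact h1) ?_)
            filter_upwards [h2] with ω hω
            simp only [Pi.mul_apply, Pi.zero_apply] at hω ⊢
            rw [hω, mul_zero]
          filter_upwards [hterm 0, hterm 1] with ω h0 h1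
          simp only [Finset.sum_apply, Fin.sum_univ_two, h0, h1, Pi.zero_apply, add_zero]
  -- positive and negative parts
  set P : Ω → ℝ := fun ω => max (ξ ω) 0 with hP
  set N : Ω → ℝ := fun ω => max (-ξ ω) 0 with hN
  have hPsm : StronglyMeasurable P := (hξsm.measurable.max measurable_const).stronglyMeasurable
  have hNsm : StronglyMeasurable N := (hξsm.measurable.neg.max measurable_const).stronglyMeasurable
  have hPbdd : ∀ᵐ ω ∂μ, ‖P ω‖ ≤ 2 * K := by
    filter_upwards [hξbdd] with ω hω
    simp only [hP, Real.norm_eq_abs]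
    rw [abs_of_nonneg (le_max_right _ _)]
    exact max_le ((le_abs_self _).trans hω) (by positivity)
  have hNbdd : ∀ᵐ ω ∂μ, ‖N ω‖ ≤ 2 * K := by
    filter_upwards [hξbdd] with ω hω
    simp only [hN, Real.norm_eq_abs]
    rw [abs_of_nonneg (le_max_right _ _)]
    exact max_le ((neg_le_abs _).trans hω) (by positivity)
  have hPint : Integrable P μ :=
    ⟨hPsm.aestronglyMeasurable, HasFiniteIntegral.of_bounded hPbdd⟩
  have hNint : Integrable N μ :=
    ⟨hNsm.aestronglyMeasurable, HasFiniteIntegral.of_bounded hNbdd⟩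
  have hPN : P - N = ξ := by
    funext ω; exact max_zero_sub_max_neg_zero_eq_self (ξ ω)
  have heq : μ[P | ℱ n] =ᵐ[μ] μ[N | ℱ n] := by
    have h1 : μ[P | ℱ n] - μ[N | ℱ n] =ᵐ[μ] 0 := by
      refine ((condExp_sub hPint hNint _).symm.trans ?_)
      rw [hPN]; exact hzero
    filter_upwards [h1] with ω hω
    have := sub_eq_zero.mp (by simpa using hω)
    simpa using this
  -- the measurable sets
  have hA : MeasurableSet {ω' | ξ ω' ≤ -r} := hξsm.measurable measurableSet_Iic
  have hB : MeasurableSet {ω' | r * h / 2 ≤ ξ ω'} := hξsm.measurable measurableSet_Ici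
  have hindA_int : Integrable (Set.indicator {ω' | ξ ω' ≤ -r} (fun _ => (1 : ℝ))) μ :=
    (integrable_const (1 : ℝ)).indicator hA
  have hindB_int : Integrable (Set.indicator {ω' | r * h / 2 ≤ ξ ω'} (fun _ => (1 : ℝ))) μ :=
    (integrable_const (1 : ℝ)).indicator hB
  -- lower bound on E[N | F_n]
  have hlowN : ∀ᵐ ω ∂μ, r * h ≤ (μ[N | ℱ n]) ω := by
    have hptw : (fun ω => r * (Set.indicator {ω' | ξ ω' ≤ -r} (fun _ => (1 : ℝ)) ω)) ≤ᵐ[μ] N := by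
      refine Eventually.of_forall (fun ω => ?_)
      simp only [Set.indicator_apply, Set.mem_setOf_eq]
      by_cases hω : ξ ω ≤ -r
      · rw [if_pos hω, mul_one]
        exact le_max_of_le_left (by linarith)
      · rw [if_neg hω, mul_zero]
        exact le_max_right _ _
    have hmono := condExp_mono (m := ℱ n) (hindA_int.const_mul r) hNint hptw
    have hsmul := condExp_smul (μ := μ) (m := ℱ n) r
      (Set.indicator {ω' | ξ ω' ≤ -r} (fun _ => (1 : ℝ)))
    filter_upwards [hmono, hsmul, hneg] with ω h1 h2 h3
    have h2' : (μ[(fun ω' => r * Set.indicator {ω' | ξ ω' ≤ -r} (fun _ => (1:ℝ)) ω') | ℱ n]) ω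
        = r * (μ[Set.indicator {ω' | ξ ω' ≤ -r} (fun _ => (1:ℝ)) | ℱ n]) ω := by
      exact h2
    have : r * h ≤ r * (μ[Set.indicator {ω' | ξ ω' ≤ -r} (fun _ => (1:ℝ)) | ℱ n]) ω :=
      mul_le_mul_of_nonneg_left h3 hr.le
    calc r * h ≤ r * (μ[Set.indicator {ω' | ξ ω' ≤ -r} (fun _ => (1:ℝ)) | ℱ n]) ω := this
      _ = (μ[(fun ω' => r * Set.indicator {ω' | ξ ω' ≤ -r} (fun _ => (1:ℝ)) ω') | ℱ n]) ω :=
          h2'.symm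
      _ ≤ (μ[N | ℱ n]) ω := h1
  have hlowP : ∀ᵐ ω ∂μ, r * h ≤ (μ[P | ℱ n]) ω := by
    filter_upwards [hlowN, heq] with ω h1 h2
    rw [h2]; exact h1
  refine ⟨?_, ?_⟩
  · filter_upwards [heq, hlowP] with ω h1 h2
    exact ⟨h1, h2⟩
  -- second part
  · have hptw : P ≤ᵐ[μ] fun ω => r * h / 2
        + (2 * K) * Set.indicator {ω' | r * h / 2 ≤ ξ ω'} (fun _ => (1 : ℝ)) ω := by
      filter_upwards [hξbdd] with ω hω
      simp only [Set.indicator_apply, Set.mem_setOf_eq]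
      by_cases hmem : r * h / 2 ≤ ξ ω
      · rw [if_pos hmem, mul_one]
        have : P ω ≤ 2 * K := max_le ((le_abs_self _).trans hω) (by positivity)
        nlinarith
      · rw [if_neg hmem, mul_zero, add_zero]
        exact max_le (le_of_not_ge hmem) (by positivity)
    have hrhs_int : Integrable (fun ω => r * h / 2
        + (2 * K) * Set.indicator {ω' | r * h / 2 ≤ ξ ω'} (fun _ => (1 : ℝ)) ω) μ :=
      (integrable_const _).add (hindB_int.const_mul _)
    have hmono := condExp_mono (m := ℱ n) hPint hrhs_int hptw
    have hadd := condExp_add (μ := μ) (m := ℱ n)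
      (integrable_const (r * h / 2)) (hindB_int.const_mul (2 * K))
    have hsmul := condExp_smul (μ := μ) (m := ℱ n) (2 * K)
      (Set.indicator {ω' | r * h / 2 ≤ ξ ω'} (fun _ => (1 : ℝ)))
    have hconst := condExp_const (μ := μ) (ℱ.le n) (r * h / 2)
    filter_upwards [hmono, hadd, hsmul, hlowP] with ω h1 h2 h3 h4
    have h2' : (μ[(fun ω' => r * h / 2
          + (2 * K) * Set.indicator {ω' | r * h / 2 ≤ ξ ω'} (fun _ => (1:ℝ)) ω') | ℱ n]) ω
        = r * h / 2 + (2 * K) * (μ[Set.indicator {ω' | r * h / 2 ≤ ξ ω'}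
            (fun _ => (1:ℝ)) | ℱ n]) ω := by
      have hconst' : (μ[(fun _ : Ω => r * h / 2) | ℱ n]) ω = r * h / 2 := by
        rw [hconst]
      have h3' : (μ[(fun ω' => (2 * K) * Set.indicator {ω' | r * h / 2 ≤ ξ ω'}
            (fun _ => (1:ℝ)) ω') | ℱ n]) ω
          = (2 * K) * (μ[Set.indicator {ω' | r * h / 2 ≤ ξ ω'} (fun _ => (1:ℝ)) | ℱ n]) ω := by
        exact h3
      have h2'' := h2
      simp only [Pi.add_apply] at h2''
      calc (μ[(fun ω' => r * h / 2
            + (2 * K) * Set.indicator {ω' | r * h / 2 ≤ ξ ω'} (fun _ => (1:ℝ)) ω') | ℱ n]) ω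
          = (μ[(fun _ : Ω => r * h / 2) | ℱ n]) ω
            + (μ[(fun ω' => (2 * K) * Set.indicator {ω' | r * h / 2 ≤ ξ ω'}
                (fun _ => (1:ℝ)) ω') | ℱ n]) ω := by
            exact h2''
        _ = r * h / 2 + (2 * K) * (μ[Set.indicator {ω' | r * h / 2 ≤ ξ ω'}
              (fun _ => (1:ℝ)) | ℱ n]) ω := by rw [hconst', h3']
    have hchain : r * h ≤ r * h / 2 + (2 * K) * (μ[Set.indicator {ω' | r * h / 2 ≤ ξ ω'}
        (fun _ => (1:ℝ)) | ℱ n]) ω := by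
      calc r * h ≤ (μ[P | ℱ n]) ω := h4
        _ ≤ _ := h1
        _ = _ := h2'
    have h2K : (0 : ℝ) < 2 * K := by positivity
    rw [div_le_iff₀ (by positivity)]
    nlinarith [hchain]
end

section
/- Let (X_n) be a uniformly elliptic martingale in ℝ^d (d ≥ 2) with jumps bounded by K. Then there exists ε' > 0 (depending only on d, K, r, h) such that, writing Δ_n = X_{n+1} − X_n and φ_n the angle between X_n and Δ_n, one has E[‖Δ_n‖² cos² φ_n | F_n] < (1 − ε') E[‖Δ_n‖² | F_n] almost surely on {X_n ≠ 0}. -/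
set_option maxHeartbeats 1000000

open MeasureTheory RealInnerProductSpace

lemma aux_geom {E : Type*} [NormedAddCommGroup E] [InnerProductSpace ℝ E]
    (u ℓ Δ : E) (hu : ‖u‖ = 1) (hl : ‖ℓ‖ = 1) (r' : ℝ) (hr' : 0 ≤ r')
    (hge : r' ≤ ⟪ℓ, Δ⟫ - |⟪ℓ, u⟫| * ‖Δ‖) :
    r' ^ 2 ≤ ‖Δ‖ ^ 2 - ⟪u, Δ⟫ ^ 2 := by
  set c : ℝ := ⟪ℓ, u⟫ with hc
  set t : ℝ := ⟪u, Δ⟫ with ht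
  set w : E := ℓ - c • u with hw
  set P : E := Δ - t • u with hP
  have hwP : ⟪w, P⟫ = ⟪ℓ, Δ⟫ - c * t := by
    simp only [hw, hP, inner_sub_left, inner_sub_right, real_inner_smul_left,
      real_inner_smul_right, real_inner_self_eq_norm_sq, hu]
    rw [← hc, ← ht]
    ring
  have htle : |t| ≤ ‖Δ‖ := by
    calc |t| ≤ ‖u‖ * ‖Δ‖ := abs_real_inner_le_norm u Δ
    _ = ‖Δ‖ := by rw [hu]; ring
  have h1 : r' ≤ ⟪w, P⟫ := by
    rw [hwP]
    have h2 : |c * t| ≤ |c| * ‖Δ‖ := by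
      rw [abs_mul]
      exact mul_le_mul_of_nonneg_left htle (abs_nonneg c)
    nlinarith [le_abs_self (c * t)]
  have hnw : ‖w‖ ^ 2 = 1 - c ^ 2 := by
    rw [hw, norm_sub_sq_real, real_inner_smul_right, norm_smul, ← hc]
    simp [hu, hl, abs_mul_abs_self, Real.norm_eq_abs]
    ring
  have hnP : ‖P‖ ^ 2 = ‖Δ‖ ^ 2 - t ^ 2 := by
    rw [hP, norm_sub_sq_real, real_inner_smul_right, real_inner_comm u Δ, ← ht]
    simp [hu, abs_mul_abs_self, Real.norm_eq_abs, norm_smul]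
    ring
  have hCS : ⟪w, P⟫ ^ 2 ≤ ‖w‖ ^ 2 * ‖P‖ ^ 2 := by
    have := abs_real_inner_le_norm w P
    nlinarith [le_abs_self ⟪w, P⟫, neg_abs_le ⟪w, P⟫, norm_nonneg w, norm_nonneg P]
  nlinarith [sq_nonneg c, sq_nonneg (‖P‖), sq_nonneg t]

lemma exists_orth (d : ℕ) (hd : 2 ≤ d) (x : EuclideanSpace ℝ (Fin d)) :
    ∃ ℓ : EuclideanSpace ℝ (Fin d), ‖ℓ‖ = 1 ∧ ⟪ℓ, x⟫ = 0 := by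
  classical
  have hfin : Module.finrank ℝ (EuclideanSpace ℝ (Fin d)) = d := finrank_euclideanSpace_fin
  have hrank : Module.finrank ℝ (ℝ ∙ x) + Module.finrank ℝ ((ℝ ∙ x)ᗮ) = d := by
    have h0 := Submodule.finrank_add_finrank_orthogonal (K := ℝ ∙ x)
    rw [hfin] at h0; exact h0
  have hspan : Module.finrank ℝ (ℝ ∙ x) ≤ 1 := by
    have := finrank_span_le_card (R := ℝ) ({x} : Set (EuclideanSpace ℝ (Fin d)))
    simpa using this
  have hSpos : (ℝ ∙ x)ᗮ ≠ ⊥ := by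
    intro hbot
    rw [hbot] at hrank
    simp at hrank
    omega
  obtain ⟨v, hvS, hv0⟩ := Submodule.exists_mem_ne_zero_of_ne_bot hSpos
  refine ⟨‖v‖⁻¹ • v, norm_smul_inv_norm hv0, ?_⟩
  have hvx : ⟪x, v⟫ = 0 := hvS x (Submodule.mem_span_singleton_self x)
  rw [real_inner_smul_left, real_inner_comm, hvx, mul_zero]

/-- For a uniformly elliptic martingale in `ℝ^d` with jumps bounded by `K`, there is
`ε' > 0` (depending only on `d, K, r, h`) such that, with `Δ_n = X_{n+1} − X_n` and `φ_n` the
angle between `X_n` and `Δ_n`, one has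
`E[‖Δ_n‖² cos² φ_n | F_n] < (1 − ε') E[‖Δ_n‖² | F_n]` a.s. on `{X_n ≠ 0}`. -/
theorem stmt_13 {Ω : Type*} [MeasurableSpace Ω] (μ : Measure Ω) [IsProbabilityMeasure μ]
    (d : ℕ) (hd : 2 ≤ d) (ℱ : Filtration ℕ (inferInstance : MeasurableSpace Ω))
    (X : ℕ → Ω → EuclideanSpace ℝ (Fin d)) (K r h : ℝ)
    (hK : 1 ≤ K) (hr : 0 < r) (hh : 0 < h)
    (hmart : Martingale X ℱ μ)
    (hjumps : ∀ n, ∀ᵐ ω ∂μ, ‖X (n + 1) ω - X n ω‖ ≤ K)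
    (hUE : ∀ (n : ℕ) (ℓ : EuclideanSpace ℝ (Fin d)), ‖ℓ‖ = 1 →
      ∀ᵐ ω ∂μ, h < (μ[Set.indicator {ω' | r < ⟪ℓ, X (n + 1) ω' - X n ω'⟫} (fun _ => (1 : ℝ)) | ℱ n]) ω) :
    ∃ ε' > (0 : ℝ), ∀ n : ℕ, ∀ᵐ ω ∂μ, X n ω ≠ 0 →
      (μ[fun ω' => ⟪X n ω', X (n + 1) ω' - X n ω'⟫ ^ 2 / ‖X n ω'‖ ^ 2 | ℱ n]) ω <
        (1 - ε') * (μ[fun ω' => ‖X (n + 1) ω' - X n ω'‖ ^ 2 | ℱ n]) ω := by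
  classical
  have hK0 : (0 : ℝ) < K := lt_of_lt_of_le one_pos hK
  -- countable dense family and orthogonal unit vectors
  have hne : Nonempty (EuclideanSpace ℝ (Fin d)) := ⟨0⟩
  set p : ℕ → EuclideanSpace ℝ (Fin d) := TopologicalSpace.denseSeq _ with hp
  have hpdense : DenseRange p := TopologicalSpace.denseRange_denseSeq _
  choose ℓ hℓ1 hℓ2 using fun k => exists_orth d hd (p k)
  set δ : ℝ := r / (2 * K) with hδ
  have hδ0 : 0 < δ := div_pos hr (by linarith)
  refine ⟨r ^ 2 * h / (4 * K ^ 2), by positivity, fun n => ?_⟩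
  set c : ℝ := (r / 2) ^ 2 * h with hcdef
  have hc0 : 0 < c := by positivity
  -- notation
  set Δ : Ω → EuclideanSpace ℝ (Fin d) := fun ω => X (n + 1) ω - X n ω with hΔ
  set f : Ω → ℝ := fun ω' => ⟪X n ω', Δ ω'⟫ ^ 2 / ‖X n ω'‖ ^ 2 with hf
  set g : Ω → ℝ := fun ω' => ‖Δ ω'‖ ^ 2 with hg
  set G : Ω → ℝ := fun ω' => g ω' - f ω' with hGdef
  -- measurability
  have hXm : ∀ m : ℕ, Measurable (X m) :=
    fun m => ((hmart.stronglyAdapted m).mono (ℱ.le m)).measurable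
  have hΔm : Measurable Δ := (hXm (n + 1)).sub (hXm n)
  have hfm : Measurable f := by
    apply Measurable.div
    · exact ((hXm n).inner hΔm).pow_const 2
    · exact ((hXm n).norm).pow_const 2
  have hgm : Measurable g := (hΔm.norm).pow_const 2
  -- pointwise bounds
  have hfg : ∀ ω', 0 ≤ f ω' ∧ f ω' ≤ g ω' := by
    intro ω'
    constructor
    · exact div_nonneg (sq_nonneg _) (sq_nonneg _)
    · by_cases hx : X n ω' = 0
      · have hf0 : f ω' = 0 := by simp [hf, hx]
        rw [hf0, hg]; exact sq_nonneg _
      · have hxn : (0:ℝ) < ‖X n ω'‖ ^ 2 := pow_pos (norm_pos_iff.mpr hx) 2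
        simp only [hf, hg]
        rw [div_le_iff₀ hxn]
        have hCS := real_inner_mul_inner_self_le (X n ω') (Δ ω')
        rw [real_inner_self_eq_norm_sq, real_inner_self_eq_norm_sq] at hCS
        nlinarith [norm_nonneg (X n ω'), norm_nonneg (Δ ω')]
  -- integrability
  have hg_int : Integrable g μ := by
    refine Integrable.mono' (integrable_const (K ^ 2)) hgm.aestronglyMeasurable ?_
    filter_upwards [hjumps n] with ω' hω'
    have h0 : (0:ℝ) ≤ ‖Δ ω'‖ := norm_nonneg _
    have hgv : g ω' = ‖Δ ω'‖ ^ 2 := rfl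
    rw [Real.norm_eq_abs, abs_of_nonneg (by rw [hgv]; positivity), hgv]
    nlinarith
  have hf_int : Integrable f μ := by
    refine Integrable.mono' (integrable_const (K ^ 2)) hfm.aestronglyMeasurable ?_
    filter_upwards [hjumps n] with ω' hω'
    have h0 : (0:ℝ) ≤ ‖Δ ω'‖ := norm_nonneg _
    rw [Real.norm_eq_abs, abs_of_nonneg (hfg ω').1]
    have h1 := (hfg ω').2
    have hgv : g ω' = ‖Δ ω'‖ ^ 2 := rfl
    rw [hgv] at h1
    nlinarith
  have hG_int : Integrable G μ := hg_int.sub hf_int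
  -- sets and indicators
  set ind : ℕ → Ω → ℝ :=
    fun k => Set.indicator {ω' | r < ⟪ℓ k, X (n + 1) ω' - X n ω'⟫} (fun _ => (1 : ℝ)) with hind
  have hind_meas : ∀ k, MeasurableSet {ω' | r < ⟪ℓ k, X (n + 1) ω' - X n ω'⟫} := by
    intro k
    exact measurableSet_lt measurable_const (measurable_const.inner hΔm)
  have hind_int : ∀ k, Integrable (ind k) μ :=
    fun k => (integrable_const (1:ℝ)).indicator (hind_meas k)
  set B : ℕ → Set (EuclideanSpace ℝ (Fin d)) :=
    fun k => {x | ‖(‖x‖⁻¹ • x) - p k‖ < δ} with hB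
  have hB_meas : ∀ k, MeasurableSet (B k) := by
    intro k
    have hφ : Measurable (fun x : EuclideanSpace ℝ (Fin d) => ‖(‖x‖⁻¹ • x) - p k‖) :=
      ((measurable_norm.inv.smul measurable_id).sub measurable_const).norm
    exact measurableSet_lt hφ measurable_const
  set A : ℕ → Set Ω := fun k => X n ⁻¹' B k with hA
  have hA_meas : ∀ k, MeasurableSet[ℱ n] (A k) := by
    intro k
    exact (hmart.stronglyAdapted n).measurable (hB_meas k)
  have hA_mem : ∀ k ω', ω' ∈ A k ↔ ‖(‖X n ω'‖⁻¹ • X n ω') - p k‖ < δ := by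
    intro k ω'; rfl
  have hA_meas0 : ∀ k, MeasurableSet (A k) := fun k => ℱ.le n _ (hA_meas k)
  -- coverage
  have hcov : ∀ ω', X n ω' ≠ 0 → ∃ k, ω' ∈ A k := by
    intro ω' hx
    obtain ⟨k, hk⟩ := hpdense.exists_dist_lt (‖X n ω'‖⁻¹ • X n ω') hδ0
    refine ⟨k, ?_⟩
    rw [hA_mem, ← dist_eq_norm]
    exact hk
  -- pointwise key inequality
  have hkey_pt : ∀ k, ∀ᵐ ω' ∂μ,
      (A k).indicator (fun ω'' => (r / 2) ^ 2 • ind k ω'') ω' ≤ (A k).indicator G ω' := by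
    intro k
    filter_upwards [hjumps n] with ω' hjump
    by_cases hmem : ω' ∈ A k
    · rw [Set.indicator_of_mem hmem, Set.indicator_of_mem hmem]
      have hG0 : 0 ≤ G ω' := by
        have := (hfg ω').2; simp only [hGdef]; linarith
      by_cases hev : ω' ∈ {ω'' | r < ⟪ℓ k, X (n + 1) ω'' - X n ω''⟫}
      · rw [hind]
        simp only [Set.indicator_of_mem hev, smul_eq_mul, mul_one]
        have hrΔ : r < ⟪ℓ k, Δ ω'⟫ := hev
        by_cases hx : X n ω' = 0
        · have hf0 : f ω' = 0 := by simp [hf, hx]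
          have hnΔ : r ≤ ‖Δ ω'‖ := by
            have := abs_real_inner_le_norm (ℓ k) (Δ ω')
            rw [hℓ1 k, one_mul] at this
            nlinarith [le_abs_self ⟪ℓ k, Δ ω'⟫]
          simp only [hGdef, hf0, sub_zero, hg]
          nlinarith
        · set u : EuclideanSpace ℝ (Fin d) := ‖X n ω'‖⁻¹ • X n ω' with hu
          have hxn : ‖X n ω'‖ ≠ 0 := norm_ne_zero_iff.mpr hx
          have hun : ‖u‖ = 1 := norm_smul_inv_norm hx
          have hcu : |⟪ℓ k, u⟫| ≤ δ := by
            have : ⟪ℓ k, u⟫ = ⟪ℓ k, u - p k⟫ := by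
              rw [inner_sub_right, hℓ2 k, sub_zero]
            rw [this]
            calc |⟪ℓ k, u - p k⟫| ≤ ‖ℓ k‖ * ‖u - p k‖ := abs_real_inner_le_norm _ _
            _ = ‖u - p k‖ := by rw [hℓ1 k, one_mul]
            _ ≤ δ := le_of_lt ((hA_mem k ω').mp hmem)
          have hge : r / 2 ≤ ⟪ℓ k, Δ ω'⟫ - |⟪ℓ k, u⟫| * ‖Δ ω'‖ := by
            have h1 : |⟪ℓ k, u⟫| * ‖Δ ω'‖ ≤ δ * K :=
              mul_le_mul hcu hjump (norm_nonneg _) (le_of_lt hδ0)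
            have h2 : δ * K = r / 2 := by
              rw [hδ]; field_simp
            linarith
          have hbessel := aux_geom u (ℓ k) (Δ ω') hun (hℓ1 k) (r / 2) (by positivity) hge
          have hfu : f ω' = ⟪u, Δ ω'⟫ ^ 2 := by
            rw [hf, hu, real_inner_smul_left, mul_pow]
            field_simp
          simp only [hGdef, hg, hfu] at *
          linarith
      · rw [hind]
        simp only [Set.indicator_of_notMem hev, smul_eq_mul, mul_zero]
        exact hG0
    · rw [Set.indicator_of_notMem hmem, Set.indicator_of_notMem hmem]
  -- conditional expectation chain, per k
  have hkey : ∀ k, ∀ᵐ ω ∂μ, ω ∈ A k →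
      (r / 2) ^ 2 * (μ[ind k | ℱ n]) ω ≤ (μ[G | ℱ n]) ω := by
    intro k
    have hsm_int : Integrable ((r / 2) ^ 2 • ind k) μ := (hind_int k).smul _
    have hI1 : Integrable ((A k).indicator ((r / 2) ^ 2 • ind k)) μ :=
      hsm_int.indicator (hA_meas0 k)
    have hI2 : Integrable ((A k).indicator G) μ := hG_int.indicator (hA_meas0 k)
    have e1 : μ[(A k).indicator ((r / 2) ^ 2 • ind k) | ℱ n]
        ≤ᵐ[μ] μ[(A k).indicator G | ℱ n] :=
      condExp_mono hI1 hI2 (hkey_pt k)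
    have e2 : μ[(A k).indicator ((r / 2) ^ 2 • ind k) | ℱ n]
        =ᵐ[μ] (A k).indicator (μ[(r / 2) ^ 2 • ind k | ℱ n]) :=
      condExp_indicator hsm_int (hA_meas k)
    have e3 : μ[(r / 2) ^ 2 • ind k | ℱ n] =ᵐ[μ] (r / 2) ^ 2 • μ[ind k | ℱ n] :=
      condExp_smul ((r / 2) ^ 2) (ind k) _
    have e4 : μ[(A k).indicator G | ℱ n] =ᵐ[μ] (A k).indicator (μ[G | ℱ n]) :=
      condExp_indicator hG_int (hA_meas k)
    filter_upwards [e1, e2, e3, e4] with ω h1 h2 h3 h4 hmem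
    rw [h2, h4, Set.indicator_of_mem hmem, Set.indicator_of_mem hmem] at h1
    rw [h3] at h1
    simpa using h1
  -- conditional expectations: decomposition and bound
  have hsub : μ[G | ℱ n] =ᵐ[μ] μ[g | ℱ n] - μ[f | ℱ n] := condExp_sub hg_int hf_int _
  have hgK : μ[g | ℱ n] ≤ᵐ[μ] fun _ => K ^ 2 := by
    have h1 : g ≤ᵐ[μ] fun _ => K ^ 2 := by
      filter_upwards [hjumps n] with ω' hω'
      have h0 : (0:ℝ) ≤ ‖Δ ω'‖ := norm_nonneg _
      simp only [hg]
      nlinarith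
    have h2 : μ[g | ℱ n] ≤ᵐ[μ] μ[(fun _ => K ^ 2 : Ω → ℝ) | ℱ n] :=
      condExp_mono hg_int (integrable_const (K ^ 2)) h1
    have h3 : μ[(fun _ => K ^ 2 : Ω → ℝ) | ℱ n] = fun _ => K ^ 2 := condExp_const (ℱ.le n) _
    rw [h3] at h2
    exact h2
  -- combine
  filter_upwards [ae_all_iff.mpr hkey, ae_all_iff.mpr (fun k => hUE n (ℓ k) (hℓ1 k)),
    hsub, hgK] with ω hkeyω hUEω hsubω hgKω hx
  obtain ⟨k, hk⟩ := hcov ω hx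
  have h1 : (r / 2) ^ 2 * (μ[ind k | ℱ n]) ω ≤ (μ[G | ℱ n]) ω := hkeyω k hk
  have h2 : h < (μ[ind k | ℱ n]) ω := hUEω k
  have h3 : c < (μ[G | ℱ n]) ω := by
    have : (r / 2) ^ 2 * h < (r / 2) ^ 2 * (μ[ind k | ℱ n]) ω := by
      apply mul_lt_mul_of_pos_left h2 (by positivity)
    rw [hcdef]; linarith
  have h4 : (μ[G | ℱ n]) ω = (μ[g | ℱ n]) ω - (μ[f | ℱ n]) ω := by
    rw [hsubω]; rfl
  have h5 : (μ[g | ℱ n]) ω ≤ K ^ 2 := hgKω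
  have hceps : r ^ 2 * h / (4 * K ^ 2) * K ^ 2 = c := by
    rw [hcdef]; field_simp; ring
  have heps : r ^ 2 * h / (4 * K ^ 2) * (μ[g | ℱ n]) ω ≤ c := by
    rw [← hceps]
    apply mul_le_mul_of_nonneg_left h5 (by positivity)
  nlinarith [h3, h4, heps]
end
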